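/- Let x be a bijection of ZMod n with x(0) = 0, stabilized by shift-by-t (x(u+t) = x(u)+x(t) for all u, t dividing n), and suppose x⁻¹(u) = x(u+s) − x(s) for all u, with x(t) + t = u₁·t and x(s) + s = u₂·t in ZMod n (u₁, u₂ integers). Then 2·u₂ ≡ u₁·u₂ (mod n/t); in particular, if i·u₁ ≡ 0 (mod n/t) then 2·i·u₂ ≡ 0 (mod n/t). -/

import Mathlib

/-- With `x(t)+t = u₁·t` and `x(s)+s = u₂·t`, one has `2u₂ ≡ u₁u₂ (mod n/t)`;
in particular `i·u₁ ≡ 0 (mod n/t)` implies `2·i·u₂ ≡ 0 (mod n/t)`. -/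
theorem stmt_8 (n t : ℕ) (hn : 0 < n) (ht : 0 < t) (htn : t ∣ n)
    (x : Equiv.Perm (ZMod n)) (h0 : x 0 = 0)
    (hadd : ∀ u, x (u + (t : ZMod n)) = x u + x (t : ZMod n))
    (s : ZMod n) (hs : ∀ u, x.symm u = x (u + s) - x s)
    (u₁ u₂ : ℤ)
    (hu1 : x (t : ZMod n) + (t : ZMod n) = (u₁ : ZMod n) * (t : ZMod n))
    (hu2 : x s + s = (u₂ : ZMod n) * (t : ZMod n)) :
    (2 * u₂ ≡ u₁ * u₂ [ZMOD ((n / t : ℕ) : ℤ)]) ∧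
    ∀ i : ℤ, i * u₁ ≡ 0 [ZMOD ((n / t : ℕ) : ℤ)] →
      2 * i * u₂ ≡ 0 [ZMOD ((n / t : ℕ) : ℤ)] := by
  -- iterate `hadd`
  have hX : ∀ (u : ZMod n) (k : ℤ),
      x (u + (k : ZMod n) * (t : ZMod n)) = x u + (k : ZMod n) * x (t : ZMod n) := by
    intro u k
    induction k using Int.induction_on with
    | zero => simp
    | succ k ih =>
        have e : u + (((k : ℤ) + 1 : ℤ) : ZMod n) * (t : ZMod n)
            = (u + ((k : ℤ) : ZMod n) * (t : ZMod n)) + (t : ZMod n) := by push_cast; ring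
        rw [e, hadd, ih]; push_cast; ring
    | pred k ih =>
        have e : u + ((-(k : ℤ) : ℤ) : ZMod n) * (t : ZMod n)
            = (u + ((-(k : ℤ) - 1 : ℤ) : ZMod n) * (t : ZMod n)) + (t : ZMod n) := by
          push_cast; ring
        have h2 := hadd (u + ((-(k : ℤ) - 1 : ℤ) : ZMod n) * (t : ZMod n))
        rw [← e, ih] at h2
        push_cast at h2 ⊢
        linear_combination -h2
  -- key identity: s + x s = u₂ * x t
  have hkey : s + x s = (u₂ : ZMod n) * x (t : ZMod n) := by
    have h1 := hs (x s)
    rw [Equiv.symm_apply_apply, hu2] at h1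
    have h2 := hX 0 u₂
    rw [zero_add, h0, zero_add] at h2
    rw [h2] at h1
    linear_combination h1
  -- hence (u₁u₂ - 2u₂) * t = 0 in ZMod n
  have hz : (((u₁ * u₂ - 2 * u₂) * (t : ℤ) : ℤ) : ZMod n) = 0 := by
    have hxt : x (t : ZMod n) = (u₁ : ZMod n) * (t : ZMod n) - (t : ZMod n) := by
      linear_combination hu1
    rw [hxt] at hkey
    push_cast
    linear_combination hu2 - hkey
  -- translate to divisibility
  have hdvd : ((n / t : ℕ) : ℤ) ∣ u₁ * u₂ - 2 * u₂ := by
    have h3 : (n : ℤ) ∣ (u₁ * u₂ - 2 * u₂) * (t : ℤ) :=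
      (ZMod.intCast_zmod_eq_zero_iff_dvd _ n).mp hz
    have hnt : (n : ℤ) = ((n / t : ℕ) : ℤ) * (t : ℤ) := by
      rw [← Nat.cast_mul, Nat.div_mul_cancel htn]
    rw [hnt] at h3
    exact (mul_dvd_mul_iff_right (by exact_mod_cast ht.ne')).mp h3
  have main : 2 * u₂ ≡ u₁ * u₂ [ZMOD ((n / t : ℕ) : ℤ)] :=
    (Int.modEq_iff_dvd.mpr (by simpa using hdvd))
  refine ⟨main, fun i hi => ?_⟩
  have := main.mul_left i
  calc 2 * i * u₂ = i * (2 * u₂) := by ring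
    _ ≡ i * (u₁ * u₂) [ZMOD ((n / t : ℕ) : ℤ)] := this
    _ = (i * u₁) * u₂ := by ring
    _ ≡ 0 * u₂ [ZMOD ((n / t : ℕ) : ℤ)] := hi.mul_right u₂
    _ = 0 := by ring
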